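/- arXiv:1101.4415 — 2 statements merged into one kernel-verified Lean document; each statement's English description precedes it below -/
import Mathlib

section
/- Let w = c_1 c_2 ... c_n be a word written as a concatenation of associative Lyndon–Shirshov words with c_1 ≤ c_2 ≤ ... ≤ c_n (its Lyndon factorization). If v is an associative Lyndon–Shirshov word that occurs as a (contiguous) subword of w, then v is a subword of c_i for some single index i; that is, v cannot properly straddle two or more factors. -/
variable {X : Type*} [LinearOrder X]

/-- Lexicographic order on words in which every word is smaller than
each of its proper prefixes (the empty word is the largest word):
`u < v` iff `u = x::u'`, `v = y::v'` and `x < y`, or `x = y` and `u' < v'`;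
moreover every nonempty word is smaller than the empty word. -/
def llt : List X → List X → Prop
  | [], _ => False
  | _ :: _, [] => True
  | a :: u, b :: v => a < b ∨ (a = b ∧ llt u v)

/-- Associative Lyndon–Shirshov word: a nonempty word `w` such that
`w > v ++ u` for every factorization `w = u ++ v` into nonempty words. -/
def IsLS (w : List X) : Prop :=
  w ≠ [] ∧ ∀ u v : List X, u ≠ [] → v ≠ [] → w = u ++ v → llt (v ++ u) w

lemma not_llt_nil (v : List X) : ¬ llt ([] : List X) v := by simp [llt]

lemma llt_nil_of_ne {u : List X} (hu : u ≠ []) : llt u ([] : List X) := by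
  cases u with
  | nil => exact absurd rfl hu
  | cons a u => trivial

lemma llt_trichotomy : ∀ u v : List X, llt u v ∨ u = v ∨ llt v u
  | [], [] => Or.inr (Or.inl rfl)
  | [], _ :: _ => Or.inr (Or.inr trivial)
  | _ :: _, [] => Or.inl trivial
  | a :: u, b :: v => by
    rcases lt_trichotomy a b with h | h | h
    · exact Or.inl (Or.inl h)
    · rcases llt_trichotomy u v with h' | h' | h'
      · exact Or.inl (Or.inr ⟨h, h'⟩)
      · exact Or.inr (Or.inl (by rw [h, h']))
      · exact Or.inr (Or.inr (Or.inr ⟨h.symm, h'⟩))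
    · exact Or.inr (Or.inr (Or.inl h))

lemma llt_irrefl : ∀ u : List X, ¬ llt u u
  | [] => not_llt_nil []
  | a :: u => by
    intro h
    rcases h with h | ⟨_, h⟩
    · exact lt_irrefl a h
    · exact llt_irrefl u h

lemma llt_trans : ∀ u v w : List X, llt u v → llt v w → llt u w
  | [], _, _, h, _ => absurd h (not_llt_nil _)
  | _ :: _, [], _, _, h => absurd h (not_llt_nil _)
  | _ :: _, _ :: _, [], _, _ => trivial
  | a :: u, b :: v, c :: w, h1, h2 => by
    rcases h1 with h1 | ⟨rfl, h1⟩ <;> rcases h2 with h2 | ⟨rfl, h2⟩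
    · exact Or.inl (h1.trans h2)
    · exact Or.inl h1
    · exact Or.inl h2
    · exact Or.inr ⟨rfl, llt_trans u v w h1 h2⟩

lemma llt_asymm {u v : List X} (h1 : llt u v) (h2 : llt v u) : False :=
  llt_irrefl u (llt_trans u v u h1 h2)

/-- extending a word makes it `llt`-smaller -/
lemma llt_append : ∀ (u t : List X), t ≠ [] → llt (u ++ t) u
  | [], t, ht => by simpa using llt_nil_of_ne ht
  | a :: u, t, ht => Or.inr ⟨rfl, llt_append u t ht⟩

lemma llt_append_left_iff : ∀ (c a b : List X), (llt (c ++ a) (c ++ b) ↔ llt a b)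
  | [], a, b => Iff.rfl
  | x :: c, a, b => by
    simp only [List.cons_append]
    show (x < x ∨ (x = x ∧ llt (c ++ a) (c ++ b))) ↔ llt a b
    simp [lt_irrefl, llt_append_left_iff c a b]

lemma llt_append_of_length_eq : ∀ u z : List X, u.length = z.length → llt u z →
    ∀ p q : List X, llt (u ++ p) (z ++ q)
  | [], _, _, h, _, _ => absurd h (not_llt_nil _)
  | _ :: _, [], h, _, _, _ => by simp at h
  | a :: u, b :: z, hl, h, p, q => by
    rcases h with h | ⟨rfl, h⟩
    · exact Or.inl h
    · exact Or.inr ⟨rfl, llt_append_of_length_eq u z (by simpa using hl) h p q⟩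

lemma llt_append_right_of_not_prefix : ∀ a b : List X, llt a b → ¬ b <+: a →
    ∀ c : List X, llt a (b ++ c)
  | [], _, h, _, _ => absurd h (not_llt_nil _)
  | _ :: _, [], _, hp, _ => absurd List.nil_prefix hp
  | x :: a, y :: b, h, hp, c => by
    rcases h with h | ⟨rfl, h⟩
    · exact Or.inl h
    · refine Or.inr ⟨rfl, llt_append_right_of_not_prefix a b h ?_ c⟩
      intro hb
      exact hp (List.cons_prefix_cons.mpr ⟨rfl, hb⟩)

/-- a proper nonempty suffix of a Lyndon–Shirshov word is `llt`-below it -/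
lemma llt_suffix_of_isLS {v u t : List X} (hv : IsLS v) (h : v = u ++ t)
    (hu : u ≠ []) (ht : t ≠ []) : llt t v := by
  rcases llt_trichotomy t v with H | H | H
  · exact H
  · exfalso
    have hlen : v.length = u.length + t.length := by rw [h, List.length_append]
    rw [← H] at hlen
    have hu0 : u.length = 0 := by omega
    exact hu (List.length_eq_zero_iff.mp hu0)
  · exfalso
    have hrot := hv.2 u t hu ht h
    by_cases hp : t <+: v
    · obtain ⟨z, hz⟩ := hp
      have hzne : z ≠ [] := by
        rintro rfl
        rw [List.append_nil] at hz
        rw [hz] at H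
        exact llt_irrefl v H
      have hrot2 := hv.2 t z ht hzne hz.symm
      have h1 : llt u z := by
        rw [← hz] at hrot
        exact (llt_append_left_iff t u z).1 hrot
      have hlenu : u.length = z.length := by
        have h2 := congrArg List.length h
        have h3 := congrArg List.length hz
        simp at h2 h3
        omega
      have h4 : llt (u ++ t) (z ++ t) := llt_append_of_length_eq u z hlenu h1 t t
      have h5 : llt (z ++ t) (u ++ t) := by rw [← h]; exact hrot2
      exact llt_asymm h4 h5
    · exact llt_asymm hrot (llt_append_right_of_not_prefix v t H hp u)

lemma chain_rel : ∀ (c : List X) (cs : List (List X)),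
    List.Chain' (fun p q : List X => ¬ llt q p) (c :: cs) → ∀ d ∈ cs, ¬ llt d c := by
  intro c cs
  induction cs generalizing c with
  | nil => intro _ d hd; simp at hd
  | cons e cs ih =>
    intro hch d hd
    have h1 : ¬ llt e c := (List.isChain_cons_cons.mp hch).1
    rcases List.mem_cons.mp hd with rfl | hd'
    · exact h1
    · have h2 : ¬ llt d e := ih e hch.tail d hd'
      intro hdc
      rcases llt_trichotomy e c with h | h | h
      · exact h1 h
      · exact h2 (h ▸ hdc)
      · exact h2 (llt_trans d c e hdc h)

/-- key induction: an LS word `v` with a proper nonempty suffix `t` that is a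
prefix of a concatenation of words all `llt`-below `v` is impossible -/
lemma straddle_false {v : List X} (hv : IsLS v) :
    ∀ ds : List (List X), (∀ d ∈ ds, llt v d) →
    ∀ u t : List X, u ≠ [] → t ≠ [] → v = u ++ t → t <+: ds.flatten → False := by
  intro ds
  induction ds with
  | nil =>
    intro _ u t hu ht hvt hpre
    simp at hpre
    exact ht hpre
  | cons d ds ih =>
    intro hlt u t hu ht hvt hpre
    have htv : llt t v := llt_suffix_of_isLS hv hvt hu ht
    rw [List.flatten_cons] at hpre
    have hvd : llt v d := hlt d (List.mem_cons_self)
    rcases List.prefix_or_prefix_of_prefix hpre (List.prefix_append d ds.flatten) with h | h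
    · -- t <+: d : then v llt t, contradiction
      obtain ⟨z, hz⟩ := h
      have hvt' : llt v t := by
        rcases eq_or_ne z [] with rfl | hzne
        · rw [List.append_nil] at hz; rw [← hz] at hvd; exact hvd
        · have : llt d t := by rw [← hz]; exact llt_append t z hzne
          exact llt_trans v d t hvd this
      exact llt_asymm htv hvt'
    · -- d <+: t
      obtain ⟨t₂, ht₂⟩ := h
      rcases eq_or_ne t₂ [] with rfl | ht2
      · rw [List.append_nil] at ht₂
        rw [ht₂] at hvd
        exact llt_asymm htv hvd
      · have hpre2 : t₂ <+: ds.flatten := by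
          rw [← ht₂] at hpre
          obtain ⟨z, hz⟩ := hpre
          rw [List.append_assoc] at hz
          exact ⟨z, List.append_cancel_left hz⟩
        exact ih (fun e he => hlt e (List.mem_cons_of_mem d he))
          (u ++ d) t₂ (by simp [hu]) ht2
          (by rw [hvt, ← ht₂, List.append_assoc]) hpre2

lemma main_aux {v : List X} (hv : IsLS v) :
    ∀ cs : List (List X), (∀ c ∈ cs, IsLS c) →
    List.Chain' (fun p q : List X => ¬ llt q p) cs →
    ∀ x y : List X, cs.flatten = x ++ v ++ y →
    ∃ c ∈ cs, ∃ p q : List X, c = p ++ v ++ q := by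
  intro cs
  induction cs with
  | nil =>
    intro _ _ x y h
    exfalso
    simp only [List.flatten_nil] at h
    have := h.symm
    simp only [List.append_eq_nil_iff] at this
    exact hv.1 this.1.2
  | cons c cs ih =>
    intro hLS hch x y h
    rw [List.flatten_cons] at h
    by_cases h1 : x.length + v.length ≤ c.length
    · -- v inside c
      have hp1 : (x ++ v) <+: c ++ cs.flatten := by
        rw [h]
        exact List.prefix_append _ _
      have hp2 : (x ++ v) <+: c :=
        List.prefix_of_prefix_length_le hp1 (List.prefix_append c _) (by simpa using h1)
      obtain ⟨q, hq⟩ := hp2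
      exact ⟨c, List.mem_cons_self, x, q, by rw [← hq, List.append_assoc]⟩
    · by_cases h2 : c.length ≤ x.length
      · -- v entirely after c
        have hp1 : x <+: c ++ cs.flatten := by
          rw [h]
          exact ⟨v ++ y, by simp [List.append_assoc]⟩
        have hcx : c <+: x :=
          List.prefix_of_prefix_length_le (List.prefix_append c _) hp1 h2
        obtain ⟨x', hx'⟩ := hcx
        have h' : cs.flatten = x' ++ v ++ y := by
          rw [← hx'] at h
          simp only [List.append_assoc] at h
          rw [List.append_assoc]
          exact List.append_cancel_left h
        obtain ⟨e, he, pf⟩ := ih (fun d hd => hLS d (List.mem_cons_of_mem _ hd)) hch.tail x' y h'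
        exact ⟨e, List.mem_cons_of_mem _ he, pf⟩
      · -- straddle: contradiction
        exfalso
        push_neg at h1 h2
        have hxc : x <+: c :=
          List.prefix_of_prefix_length_le
            (by rw [h]; exact ⟨v ++ y, by simp [List.append_assoc]⟩)
            (List.prefix_append c _) (le_of_lt h2)
        obtain ⟨s, hs⟩ := hxc
        have hlens : x.length + s.length = c.length := by
          have := congrArg List.length hs; simpa using this
        have hsne : s ≠ [] := by
          intro hnil; rw [hnil] at hlens; simp at hlens; omega
        have hst : s ++ cs.flatten = v ++ y := by
          rw [← hs] at h
          simp only [List.append_assoc] at h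
          exact List.append_cancel_left h
        have hsv : s <+: v := by
          refine List.prefix_of_prefix_length_le ⟨cs.flatten, hst⟩
            (List.prefix_append v y) ?_
          omega
        obtain ⟨t, htv⟩ := hsv
        have htne : t ≠ [] := by
          intro hnil
          rw [hnil, List.append_nil] at htv
          have := congrArg List.length htv
          omega
        have hflat : t <+: cs.flatten := by
          rw [← htv] at hst
          rw [List.append_assoc] at hst
          exact ⟨y, (List.append_cancel_left hst).symm⟩
        have hvs : llt v s := by rw [← htv]; exact llt_append s t htne
        have hvc : llt v c := by
          rcases eq_or_ne x [] with rfl | hx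
          · rw [List.nil_append] at hs; rw [hs] at hvs; exact hvs
          · exact llt_trans v s c hvs
              (llt_suffix_of_isLS (hLS c List.mem_cons_self) hs.symm hx hsne)
        have hpair : ∀ d ∈ cs, ¬ llt d c := chain_rel c cs hch
        have hvd : ∀ d ∈ cs, llt v d := by
          intro d hd
          rcases llt_trichotomy d c with hdc | rfl | hcd
          · exact absurd hdc (hpair d hd)
          · exact hvc
          · exact llt_trans v c d hvc hcd
        exact straddle_false hv cs hvd s t hsne htne htv.symm hflat

/-- If `w = c_1 ++ ... ++ c_n` is the Lyndon factorization of `w`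
(each `c_i` Lyndon--Shirshov, `c_1 ≤ ... ≤ c_n`) and a Lyndon--Shirshov word `v`
occurs as a contiguous subword of `w`, then `v` is a subword of some single
factor `c_i`. -/
theorem stmt_4 {w v : List X} {cs : List (List X)}
    (hcs : ∀ c ∈ cs, IsLS c) (hsort : List.Chain' (fun p q => ¬ llt q p) cs)
    (hw : cs.flatten = w) (hv : IsLS v) {x y : List X} (hocc : w = x ++ v ++ y) :
    ∃ c ∈ cs, ∃ p q : List X, c = p ++ v ++ q := by
  subst hw
  exact main_aux hv cs hcs hsort x y hocc
end

section
/- In the free Lie algebra over a field k on a linearly ordered set X, the set of nonassociative Lyndon–Shirshov words (evaluated via the commutator bracketing in the free associative algebra) forms a linear basis. -/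
noncomputable section

variable {X : Type*} [LinearOrder X] (k : Type*) [Field k]

attribute [local instance] LieRing.ofAssociativeRing

/-- deg-lex order -/
def dlt (u v : List X) : Prop :=
  u.length < v.length ∨ (u.length = v.length ∧ llt u v)

/-- the free associative algebra with basis the free monoid on X -/
abbrev FA (k : Type*) [Field k] (X : Type*) := MonoidAlgebra k (FreeMonoid X)

/-- the generators x ∈ X inside the free associative algebra -/
def gens : Set (FA k X) := Set.range fun x : X => MonoidAlgebra.single (FreeMonoid.of x) (1 : k)

/-- the leading (deg-lex maximal) monomial of f is w -/
def IsLeading (f : FA k X) (w : List X) : Prop :=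
  f.coeff (FreeMonoid.ofList w) ≠ 0 ∧ ∀ v : List X, f.coeff (FreeMonoid.ofList v) ≠ 0 → v = w ∨ dlt v w

/-- underlying associative word of a nonassociative word -/
def mword : FreeMagma X → List X
  | .of x => [x]
  | .mul a b => mword a ++ mword b

/-- evaluation of a nonassociative word in the free associative algebra
via the commutator bracket -/
def evalM : FreeMagma X → FA k X
  | .of x => MonoidAlgebra.single (FreeMonoid.of x) 1
  | .mul a b => evalM a * evalM b - evalM b * evalM a

/-- nonassociative Lyndon--Shirshov word -/
def IsNLS : FreeMagma X → Prop
  | .of _ => True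
  | .mul a b => IsNLS a ∧ IsNLS b ∧ IsLS (mword a ++ mword b) ∧
      (match a with
        | .of _ => True
        | .mul _ a2 => ¬ llt (mword b) (mword a2))

/-- standard bracketing tree: at each node the right factor is the longest
proper Lyndon--Shirshov suffix -/
def IsStd : FreeMagma X → Prop
  | .of _ => True
  | .mul a b => IsStd a ∧ IsStd b ∧ IsLS (mword a ++ mword b) ∧ IsLS (mword b) ∧
      ∀ s : List X, s ≠ [] → s ≠ mword a ++ mword b → s <:+ mword a ++ mword b →
        IsLS s → s.length ≤ (mword b).length

/-- flattening of a tree of trees -/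
def mjoin : FreeMagma (FreeMagma X) → FreeMagma X
  | .of t => t
  | .mul a b => .mul (mjoin a) (mjoin b)

/-- the list of leaves of a binary tree -/
def leaves {α : Type*} : FreeMagma α → List α
  | .of x => [x]
  | .mul a b => leaves a ++ leaves b

/-- `Occurs s t p` : `s` occurs as a subtree of `t` with exactly the word `p`
to its left -/
def Occurs (s : FreeMagma X) : FreeMagma X → List X → Prop
  | .of x, p => s = .of x ∧ p = []
  | .mul l r, p => (s = .mul l r ∧ p = []) ∨ Occurs s l p ∨
      ∃ q, Occurs s r q ∧ p = mword l ++ q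

namespace LS
variable {X : Type*} [LinearOrder X]

/-- strict lex with a genuine letter difference -/
def lltL : List X → List X → Prop
  | a :: u, b :: v => a < b ∨ (a = b ∧ lltL u v)
  | _, _ => False

def lle (u v : List X) : Prop := llt u v ∨ u = v

@[simp] lemma lltL_nil_left (v : List X) : ¬ lltL [] v := by cases v <;> simp [lltL]
@[simp] lemma lltL_nil_right (u : List X) : ¬ lltL u [] := by cases u <;> simp [lltL]
lemma lltL_cons {a b : X} {u v : List X} :
    lltL (a :: u) (b :: v) ↔ a < b ∨ (a = b ∧ lltL u v) := Iff.rfl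

@[simp] lemma llt_nil_left (v : List X) : ¬ llt [] v := by cases v <;> simp [llt]
@[simp] lemma llt_nil_right (a : X) (u : List X) : llt (a :: u) [] := by simp [llt]
lemma llt_cons {a b : X} {u v : List X} :
    llt (a :: u) (b :: v) ↔ a < b ∨ (a = b ∧ llt u v) := Iff.rfl

lemma lltL.llt : ∀ {u v : List X}, lltL u v → llt u v
  | a :: u, b :: v, h => by
    rcases h with h | ⟨rfl, h⟩
    · exact Or.inl h
    · exact Or.inr ⟨rfl, h.llt⟩
  | [], v, h => by simp at h
  | a :: u, [], h => by simp at h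

lemma llt_irrefl : ∀ u : List X, ¬ llt u u
  | [] => by simp
  | a :: u => by
    intro h
    rcases h with h | ⟨-, h⟩
    · exact absurd h (lt_irrefl a)
    · exact llt_irrefl u h

lemma lltL_irrefl (u : List X) : ¬ lltL u u := fun h => llt_irrefl u h.llt

lemma llt_trans : ∀ {u v w : List X}, llt u v → llt v w → llt u w
  | _, [], w, h, h' => by simp at h'
  | [], v, w, h, h' => by simp at h
  | a :: u, b :: v, [], h, h' => by simp
  | a :: u, b :: v, c :: w, h, h' => by
    rcases h with h | ⟨rfl, h⟩ <;> rcases h' with h' | ⟨rfl, h'⟩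
    · exact Or.inl (h.trans h')
    · exact Or.inl h
    · exact Or.inl h'
    · exact Or.inr ⟨rfl, llt_trans h h'⟩

lemma lltL_trans : ∀ {u v w : List X}, lltL u v → lltL v w → lltL u w
  | _, [], w, h, h' => by simp at h
  | [], v, w, h, h' => by simp at h
  | a :: u, b :: v, [], h, h' => by simp at h'
  | a :: u, b :: v, c :: w, h, h' => by
    rcases h with h | ⟨rfl, h⟩ <;> rcases h' with h' | ⟨rfl, h'⟩
    · exact Or.inl (h.trans h')
    · exact Or.inl h
    · exact Or.inl h'
    · exact Or.inr ⟨rfl, lltL_trans h h'⟩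

lemma llt_asymm {u v : List X} (h : llt u v) : ¬ llt v u :=
  fun h' => llt_irrefl u (llt_trans h h')

lemma llt_trichotomy : ∀ u v : List X, llt u v ∨ u = v ∨ llt v u
  | [], [] => Or.inr (Or.inl rfl)
  | [], b :: v => Or.inr (Or.inr (by simp))
  | a :: u, [] => Or.inl (by simp)
  | a :: u, b :: v => by
    rcases lt_trichotomy a b with h | rfl | h
    · exact Or.inl (Or.inl h)
    · rcases llt_trichotomy u v with h | rfl | h
      · exact Or.inl (Or.inr ⟨rfl, h⟩)
      · exact Or.inr (Or.inl rfl)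
      · exact Or.inr (Or.inr (Or.inr ⟨rfl, h⟩))
    · exact Or.inr (Or.inr (Or.inl h))

lemma not_llt_iff_lle {u v : List X} : ¬ llt u v ↔ lle v u := by
  constructor
  · intro h
    rcases llt_trichotomy u v with h' | rfl | h'
    · exact absurd h' h
    · exact Or.inr rfl
    · exact Or.inl h'
  · rintro (h | rfl) h'
    · exact llt_irrefl _ (llt_trans h h')
    · exact llt_irrefl _ h'

lemma lle.trans_llt {u v w : List X} (h : lle u v) (h' : llt v w) : llt u w := by
  rcases h with h | rfl
  · exact llt_trans h h'
  · exact h'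

lemma llt_trans_lle {u v w : List X} (h : llt u v) (h' : lle v w) : llt u w := by
  rcases h' with h' | rfl
  · exact llt_trans h h'
  · exact h

lemma lle.trans {u v w : List X} (h : lle u v) (h' : lle v w) : lle u w := by
  rcases h' with h' | rfl
  · exact Or.inl (h.trans_llt h')
  · exact h

/-- appending on the right makes words smaller -/
lemma llt_append_self : ∀ (u w : List X), w ≠ [] → llt (u ++ w) u
  | [], w, hw => by cases w with | nil => simp at hw | cons a w => simp
  | a :: u, w, hw => Or.inr ⟨rfl, llt_append_self u w hw⟩

/-- llt cancels a common prefix -/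
lemma llt_append_left_iff : ∀ (c u v : List X), llt (c ++ u) (c ++ v) ↔ llt u v
  | [], u, v => Iff.rfl
  | a :: c, u, v => by
    simp only [List.cons_append, llt_cons, lt_irrefl, false_or, true_and]
    exact llt_append_left_iff c u v

lemma lltL_append_left_iff : ∀ (c u v : List X), lltL (c ++ u) (c ++ v) ↔ lltL u v
  | [], u, v => Iff.rfl
  | a :: c, u, v => by
    simp only [List.cons_append, lltL_cons, lt_irrefl, false_or, true_and]
    exact lltL_append_left_iff c u v

lemma lltL.append_right : ∀ {u v : List X} (w : List X), lltL u v → lltL (u ++ w) v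
  | a :: u, b :: v, w, h => by
    rcases h with h | ⟨rfl, h⟩
    · exact Or.inl h
    · exact Or.inr ⟨rfl, h.append_right w⟩
  | [], v, w, h => by simp at h
  | a :: u, [], w, h => by simp at h

lemma lltL.append_right' : ∀ {u v : List X} (w : List X), lltL u v → lltL u (v ++ w)
  | a :: u, b :: v, w, h => by
    rcases h with h | ⟨rfl, h⟩
    · exact Or.inl h
    · exact Or.inr ⟨rfl, h.append_right' w⟩
  | [], v, w, h => by simp at h
  | a :: u, [], w, h => by simp at h

lemma lltL.append {u v : List X} (w w' : List X) (h : lltL u v) :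
    lltL (u ++ w) (v ++ w') := (h.append_right w).append_right' w'

/-- for words of equal length, llt is lltL -/
lemma llt_iff_lltL_of_length : ∀ {u v : List X}, u.length ≤ v.length → (llt u v ↔ lltL u v)
  | [], v, h => by simp
  | a :: u, [], h => by simp at h
  | a :: u, b :: v, h => by
    simp only [List.length_cons, Nat.add_le_add_iff_right] at h
    simp only [llt_cons, lltL_cons]
    rw [llt_iff_lltL_of_length h]

/-- splitting an lltL of concatenations of equal-length prefixes -/
lemma lltL_append_split : ∀ {u v s t : List X}, u.length = v.length →
    lltL (u ++ s) (v ++ t) → lltL u v ∨ (u = v ∧ lltL s t)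
  | [], [], s, t, h, hl => Or.inr ⟨rfl, hl⟩
  | [], b :: v, s, t, h, hl => by simp at h
  | a :: u, [], s, t, h, hl => by simp at h
  | a :: u, b :: v, s, t, h, hl => by
    simp only [List.length_cons, Nat.add_right_cancel_iff] at h
    rcases hl with hl | ⟨rfl, hl⟩
    · exact Or.inl (Or.inl hl)
    · rcases lltL_append_split h hl with h' | ⟨rfl, h'⟩
      · exact Or.inl (Or.inr ⟨rfl, h'⟩)
      · exact Or.inr ⟨rfl, h'⟩

/-- llt in terms of lltL and proper prefix -/
lemma llt_iff : ∀ {u v : List X}, llt u v ↔ lltL u v ∨ (v <+: u ∧ v ≠ u)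
  | [], v => by
    simp only [llt_nil_left, lltL_nil_left, false_or, false_iff]
    rintro ⟨h, hne⟩
    exact hne (List.prefix_nil.mp h)
  | a :: u, [] => by simp [List.nil_prefix]
  | a :: u, b :: v => by
    simp only [llt_cons, lltL_cons, List.cons_prefix_cons]
    constructor
    · rintro (h | ⟨rfl, h⟩)
      · exact Or.inl (Or.inl h)
      · rcases llt_iff.mp h with h' | ⟨h1, h2⟩
        · exact Or.inl (Or.inr ⟨rfl, h'⟩)
        · refine Or.inr ⟨⟨rfl, h1⟩, fun h3 => h2 ?_⟩
          simpa using h3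
    · rintro (⟨h | ⟨rfl, h⟩⟩ | ⟨⟨rfl, h1⟩, h2⟩)
      · exact Or.inl h
      · exact Or.inr ⟨rfl, llt_iff.mpr (Or.inl h)⟩
      · refine Or.inr ⟨rfl, llt_iff.mpr (Or.inr ⟨h1, fun hh => h2 ?_⟩)⟩
        rw [hh]

lemma lle.trans_lltL {u v w : List X} (h : lle u v) (h' : lltL v w)
    (hlen : u.length ≤ v.length) : lltL u w := by
  rcases h with h | rfl
  · exact lltL_trans ((llt_iff_lltL_of_length hlen).mp h) h'
  · exact h'

end LS
namespace LS
variable {X : Type*} [LinearOrder X]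

lemma not_lltL_append_self : ∀ (v u : List X), ¬ lltL (v ++ u) v
  | [], u => by simp
  | a :: v, u => by
    intro h
    rcases h with h | ⟨-, h⟩
    · exact absurd h (lt_irrefl a)
    · exact not_lltL_append_self v u h

lemma isLS_singleton (x : X) : IsLS [x] := by
  refine ⟨by simp, fun u v hu hv he => ?_⟩
  rcases u with - | ⟨a, u⟩
  · exact absurd rfl hu
  · rcases v with - | ⟨b, v⟩
    · exact absurd rfl hv
    · simp at he

lemma _root_.IsLS.rot {w u v : List X} (h : IsLS w) (hu : u ≠ []) (hv : v ≠ [])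
    (he : w = u ++ v) : lltL (v ++ u) w := by
  have h1 := h.2 u v hu hv he
  rw [llt_iff_lltL_of_length] at h1
  · exact h1
  · rw [he]; simp [Nat.add_comm]

lemma _root_.IsLS.unbordered {w v z y : List X} (h : IsLS w) (h1 : w = v ++ z)
    (h2 : w = y ++ v) (hv : v ≠ []) (hz : z ≠ []) : False := by
  have hy : y ≠ [] := by
    rintro rfl
    simp only [List.nil_append] at h2
    rw [← h2] at h1
    exact hz (List.self_eq_append_right.mp h1)
  have hlen : z.length = y.length := by
    have e1 := congrArg List.length h1
    have e2 := congrArg List.length h2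
    simp at e1 e2
    omega
  have rot1 : lltL (z ++ v) (y ++ v) := h2 ▸ h.rot hv hz h1
  have rot2 : lltL y z := by
    have := h.rot hy hv h2
    rw [h1, lltL_append_left_iff] at this
    exact this
  rcases lltL_append_split hlen rot1 with h' | ⟨rfl, h'⟩
  · exact lltL_irrefl y (lltL_trans rot2 h')
  · exact lltL_irrefl v h'

/-- proper nonempty suffixes of LS words are smaller, with a letter difference -/
lemma _root_.IsLS.suffix_lltL {w u v : List X} (h : IsLS w) (he : w = u ++ v)
    (hu : u ≠ []) (hv : v ≠ []) : lltL v w := by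
  have hlen : v.length < w.length := by
    rw [he]; simp
    cases u with | nil => exact absurd rfl hu | cons a u => simp
  rcases llt_trichotomy v w with h' | rfl | h'
  · exact (llt_iff_lltL_of_length hlen.le).mp h'
  · simp at hlen
  · rcases llt_iff.mp h' with h' | ⟨hp, hne⟩
    · exact absurd (lltL_trans (h.rot hu hv he) h') (not_lltL_append_self v u)
    · obtain ⟨z, hz⟩ := hp
      refine absurd (h.unbordered hz.symm he hv ?_) not_false
      rintro rfl
      exact hne (by simpa using hz)

lemma lltL_append_case : ∀ (u x y : List X), lltL x (u ++ y) →
    lltL x u ∨ ∃ x', x = u ++ x' ∧ lltL x' y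
  | [], x, y, h => Or.inr ⟨x, rfl, h⟩
  | a :: u, [], y, h => by simp at h
  | a :: u, c :: x, y, h => by
    rcases h with h | ⟨rfl, h⟩
    · exact Or.inl (Or.inl h)
    · rcases lltL_append_case u x y h with h' | ⟨x', rfl, h'⟩
      · exact Or.inl (Or.inr ⟨rfl, h'⟩)
      · exact Or.inr ⟨x', rfl, h'⟩

lemma rot_step : ∀ (n : ℕ) (z u : List X), z.length ≤ n → u ≠ [] →
    lltL z (u ++ z) → lltL (z ++ u) (u ++ z)
  | 0, z, u, hn, hu, h => by
    rcases z with - | ⟨a, z⟩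
    · simp at h
    · simp at hn
  | n + 1, z, u, hn, hu, h => by
    rcases lltL_append_case u z z h with h' | ⟨z', rfl, h'⟩
    · exact h'.append u z
    · rw [List.append_assoc, lltL_append_left_iff]
      refine rot_step n z' u ?_ hu h'
      have : 1 ≤ u.length := by
        cases u with | nil => exact absurd rfl hu | cons a u => simp
      simp at hn
      omega

lemma vu_lltL_uv {u v : List X} (hu : IsLS u) (hv : IsLS v) (h : llt v u) :
    lltL (v ++ u) (u ++ v) := by
  rcases llt_iff.mp h with h' | ⟨⟨v₂, hp⟩, hne⟩
  · exact h'.append u v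
  · subst hp
    have hv₂ : v₂ ≠ [] := by rintro rfl; exact hne (by simp)
    have hs : lltL v₂ (u ++ v₂) := hv.suffix_lltL rfl hu.1 hv₂
    have := rot_step v₂.length v₂ u le_rfl hu.1 hs
    rw [List.append_assoc, lltL_append_left_iff]
    exact this

/-- concatenation theorem: u, v LS with v < u implies uv LS -/
theorem _root_.IsLS.concat {u v : List X} (hu : IsLS u) (hv : IsLS v) (h : llt v u) :
    IsLS (u ++ v) := by
  refine ⟨by simp [hu.1], fun p q hp hq he => ?_⟩
  rcases List.append_eq_append_iff.mp he.symm with ⟨a', ha1, ha2⟩ | ⟨c', hc1, hc2⟩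
  · -- u = p ++ a', q = a' ++ v
    rcases eq_or_ne a' [] with rfl | ha
    · simp only [List.append_nil] at ha1
      simp only [List.nil_append] at ha2
      subst ha1; subst ha2
      exact (vu_lltL_uv hu hv h).llt
    · have hsc : lltL a' u := hu.suffix_lltL ha1 hp ha
      rw [ha2, List.append_assoc]
      exact (hsc.append _ _).llt
  · -- p = u ++ c', v = c' ++ q
    rcases eq_or_ne c' [] with rfl | hc
    · simp only [List.append_nil] at hc1
      simp only [List.nil_append] at hc2
      subst hc1; subst hc2
      exact (vu_lltL_uv hu hv h).llt
    · have hsq : lltL q v := hv.suffix_lltL hc2 hc hq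
      have h1 : lltL (q ++ (u ++ c')) (v ++ u) := hsq.append _ _
      rw [hc1]
      exact (lltL_trans h1 (vu_lltL_uv hu hv h)).llt

end LS
namespace LS
variable {X : Type*} [LinearOrder X]

@[simp] lemma mword_of (x : X) : mword (.of x) = [x] := rfl
@[simp] lemma mword_mul (a b : FreeMagma X) : mword (a.mul b) = mword a ++ mword b := rfl
@[simp] lemma mword_mul' (a b : FreeMagma X) : mword (a * b) = mword a ++ mword b := rfl

lemma mword_ne_nil : ∀ t : FreeMagma X, mword t ≠ []
  | .of x => by simp
  | .mul a b => by
    simp only [mword_mul]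
    simp [mword_ne_nil a]

lemma _root_.IsNLS.left {a b : FreeMagma X} (h : IsNLS (a.mul b)) : IsNLS a := h.1
lemma _root_.IsNLS.right {a b : FreeMagma X} (h : IsNLS (a.mul b)) : IsNLS b := h.2.1
lemma _root_.IsNLS.ls {a b : FreeMagma X} (h : IsNLS (a.mul b)) :
    IsLS (mword a ++ mword b) := h.2.2.1
lemma _root_.IsNLS.cond3 {a1 a2 b : FreeMagma X} (h : IsNLS ((a1.mul a2).mul b)) :
    ¬ llt (mword b) (mword a2) := h.2.2.2

lemma _root_.IsNLS.isLS : ∀ {t : FreeMagma X}, IsNLS t → IsLS (mword t)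
  | .of x, _ => isLS_singleton x
  | .mul a b, h => h.ls

lemma suffix_split : ∀ (u v c : List X), c <:+ u ++ v →
    c <:+ v ∨ ∃ e, e ≠ [] ∧ e <:+ u ∧ c = e ++ v
  | [], v, c, h => Or.inl (by simpa using h)
  | a :: u, v, c, h => by
    rw [List.cons_append, List.suffix_cons_iff] at h
    rcases h with rfl | h
    · exact Or.inr ⟨a :: u, by simp, List.suffix_refl _, rfl⟩
    · rcases suffix_split u v c h with h' | ⟨e, he, hs, rfl⟩
      · exact Or.inl h'
      · exact Or.inr ⟨e, he, hs.trans (List.suffix_cons a u), rfl⟩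

/-- key lemma: if `c` is a proper nonempty suffix of the word of an NLS tree `a`,
`z ≠ []`, `c ++ z` is LS, and the right-subtree word of `a` is smaller than
`c ++ z`, then contradiction. -/
lemma L3 (a : FreeMagma X) : ∀ (c z : List X), IsNLS a → c ≠ [] → c ≠ mword a →
    c <:+ mword a → z ≠ [] → IsLS (c ++ z) →
    (∀ a1 a2 : FreeMagma X, a = a1.mul a2 → llt (mword a2) (c ++ z)) → False := by
  induction a using FreeMagma.rec with
  | of x =>
    intro c z _ hc hcne hsuf _ _ _
    simp only [mword_of] at hcne hsuf
    have h1 : c.length ≤ 1 := by simpa using hsuf.length_le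
    have h2 : c.length ≠ 0 := by simpa using hc
    exact hcne (hsuf.eq_of_length (by simp; omega))
  | mul a1 a2 ih1 ih2 =>
    intro c z hN hc hcne hsuf hz hLS hcond
    have hV : llt (mword a2) (c ++ z) := hcond a1 a2 rfl
    simp only [mword_mul] at hsuf hcne
    rcases suffix_split (mword a1) (mword a2) c hsuf with h | ⟨e, he, hes, rfl⟩
    · rcases eq_or_ne c (mword a2) with rfl | hne
      · exact llt_irrefl _ (llt_trans hV (llt_append_self _ z hz))
      · refine ih2 c z hN.right hc hne h hz hLS ?_
        rintro b1 b2 hb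
        have h1 : lltL (mword b2) (mword a2) := by
          refine hN.right.isLS.suffix_lltL ?_ (mword_ne_nil b1) (mword_ne_nil b2)
          rw [hb]; rfl
        exact llt_trans h1.llt hV
    · have hne' : e ≠ mword a1 := by
        rintro rfl
        exact hcne rfl
      refine ih1 e (mword a2 ++ z) hN.left he hne' hes (by simp [mword_ne_nil a2])
        (by rwa [← List.append_assoc]) ?_
      rintro b1 b2 hb
      subst hb
      have h1 : ¬ llt (mword a2) (mword b2) := hN.cond3
      rw [← List.append_assoc]
      exact (not_llt_iff_lle.mp h1).trans_llt hV

lemma unique_helper {a b a' b' : FreeMagma X} (h : IsNLS (a.mul b)) (h' : IsNLS (a'.mul b'))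
    (he : mword a ++ mword b = mword a' ++ mword b')
    (hlen : (mword b').length < (mword b).length) : False := by
  rcases List.append_eq_append_iff.mp he with ⟨c, hc1, hc2⟩ | ⟨c, hc1, hc2⟩
  swap
  · have h2 := congrArg List.length hc2
    rw [List.length_append] at h2
    omega
  · -- mword a' = mword a ++ c, mword b = c ++ mword b'
    have hcne : c ≠ [] := by
      rintro rfl
      have h2 := congrArg List.length hc2
      simp at h2
      omega
    have hbLS : IsLS (mword b) := h.right.isLS
    refine L3 a' c (mword b') h'.left hcne ?_ ?_ (mword_ne_nil b') (hc2 ▸ hbLS) ?_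
    · rintro rfl
      rw [List.self_eq_append_left] at hc1
      exact mword_ne_nil a hc1
    · exact hc1 ▸ List.suffix_append (mword a) c
    · rintro x1 x2 rfl
      have h1 : ¬ llt (mword b') (mword x2) := h'.cond3
      have h2 : lltL (mword b') (mword b) := hbLS.suffix_lltL hc2 hcne (mword_ne_nil b')
      exact (not_llt_iff_lle.mp h1).trans_llt (hc2 ▸ h2.llt)

/-- uniqueness of NLS bracketing -/
theorem nls_unique (t : FreeMagma X) : ∀ t' : FreeMagma X,
    IsNLS t → IsNLS t' → mword t = mword t' → t = t' := by
  induction t using FreeMagma.rec with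
  | of x =>
    intro t' _ h' he
    cases t' with
    | of y =>
      simp only [mword_of, List.cons.injEq, and_true] at he
      rw [he]
    | mul a b =>
      have hc := congrArg List.length he
      have l1 : 0 < (mword a).length := List.length_pos_iff.mpr (mword_ne_nil a)
      have l2 : 0 < (mword b).length := List.length_pos_iff.mpr (mword_ne_nil b)
      simp only [mword_of, mword_mul, List.length_append, List.length_cons,
        List.length_nil] at hc
      omega
  | mul a b iha ihb =>
    intro t' h h' he
    cases t' with
    | of x =>
      have hc := congrArg List.length he
      have l1 : 0 < (mword a).length := List.length_pos_iff.mpr (mword_ne_nil a)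
      have l2 : 0 < (mword b).length := List.length_pos_iff.mpr (mword_ne_nil b)
      simp only [mword_of, mword_mul, List.length_append, List.length_cons,
        List.length_nil] at hc
      omega
    | mul a' b' =>
      simp only [mword_mul] at he
      have hlen : (mword b).length = (mword b').length := by
        rcases lt_trichotomy (mword b).length (mword b').length with hl | hl | hl
        · exact absurd (unique_helper h' h he.symm hl) not_false
        · exact hl
        · exact absurd (unique_helper h h' he hl) not_false
      obtain ⟨e1, e2⟩ := List.append_inj' he hlen
      rw [iha a' h.left h'.left e1, ihb b' h.right h'.right e2]

end LS
namespace LS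
variable {X : Type*} [LinearOrder X] {k : Type*} [Field k]

@[simp] lemma evalM_of (x : X) :
    evalM k (FreeMagma.of x) = MonoidAlgebra.single (FreeMonoid.of x) 1 := rfl
@[simp] lemma evalM_mul (a b : FreeMagma X) :
    evalM k (a.mul b) = evalM k a * evalM k b - evalM k b * evalM k a := rfl

lemma ofList_append (u v : List X) :
    FreeMonoid.ofList (u ++ v) = FreeMonoid.ofList u * FreeMonoid.ofList v := rfl

lemma toList_ofList (u : List X) : FreeMonoid.toList (FreeMonoid.ofList u) = u := rfl
lemma ofList_toList (p : FreeMonoid X) : FreeMonoid.ofList (FreeMonoid.toList p) = p := rfl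

lemma sub_apply' (f g : FA k X) (x : FreeMonoid X) : (f - g).coeff x = f.coeff x - g.coeff x :=
  Finsupp.sub_apply f.coeff g.coeff x

lemma mul_coeff_ne_zero {f g : FA k X} {x : FreeMonoid X} (h : (f * g).coeff x ≠ 0) :
    ∃ p q : FreeMonoid X, f.coeff p ≠ 0 ∧ g.coeff q ≠ 0 ∧ p * q = x := by
  classical
  rw [MonoidAlgebra.coeff_mul] at h
  obtain ⟨p, hp, h1⟩ := Finset.exists_ne_zero_of_sum_ne_zero h
  obtain ⟨q, hq, h2⟩ := Finset.exists_ne_zero_of_sum_ne_zero h1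
  refine ⟨p, q, Finsupp.mem_support_iff.mp hp, Finsupp.mem_support_iff.mp hq, ?_⟩
  by_contra hne
  have h2' : (if p * q = x then f.coeff p * g.coeff q else 0) ≠ 0 := h2
  rw [if_neg hne] at h2'
  exact h2' rfl

lemma mul_coeff_unique {f g : FA k X} {x p₀ q₀ : FreeMonoid X} (hx : p₀ * q₀ = x)
    (H : ∀ p q : FreeMonoid X, f.coeff p ≠ 0 → g.coeff q ≠ 0 → p * q = x → p = p₀ ∧ q = q₀) :
    (f * g).coeff x = f.coeff p₀ * g.coeff q₀ := by
  classical
  rw [MonoidAlgebra.coeff_mul, Finsupp.sum]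
  rw [Finset.sum_eq_single p₀]
  · rw [Finsupp.sum, Finset.sum_eq_single q₀]
    · rw [if_pos hx]
    · intro q hq hqne
      rcases eq_or_ne (p₀ * q) x with he | he
      · rcases eq_or_ne (f.coeff p₀) 0 with h0 | h0
        · rw [if_pos he, h0, zero_mul]
        · exact absurd (H p₀ q h0 (Finsupp.mem_support_iff.mp hq) he).2 hqne
      · rw [if_neg he]
    · intro h0
      rw [Finsupp.notMem_support_iff.mp h0, mul_zero, if_pos hx]
  · intro p hp hpne
    rw [Finsupp.sum]
    refine Finset.sum_eq_zero fun q hq => ?_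
    rcases eq_or_ne (p * q) x with he | he
    · exact absurd (H p q (Finsupp.mem_support_iff.mp hp)
        (Finsupp.mem_support_iff.mp hq) he).1 hpne
    · rw [if_neg he]
  · intro h0
    rw [Finsupp.sum, Finsupp.notMem_support_iff.mp h0]
    simp

/-- the leading-term lemma: an NLS tree evaluates to its word plus
lex-smaller terms of the same length -/
theorem leading (t : FreeMagma X) (h : IsNLS t) :
    (evalM k t).coeff (FreeMonoid.ofList (mword t)) = 1 ∧
    ∀ v : List X, (evalM k t).coeff (FreeMonoid.ofList v) ≠ 0 →
      v = mword t ∨ (lltL v (mword t) ∧ v.length = (mword t).length) := by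
  induction t using FreeMagma.rec with
  | of x =>
    constructor
    · simp only [evalM_of, mword_of]
      exact Finsupp.single_eq_same
    · intro v hv
      simp only [evalM_of, mword_of] at hv ⊢
      left
      by_contra hne
      refine hv (Finsupp.single_eq_of_ne' fun he => hne ?_)
      have := congrArg FreeMonoid.toList he
      simpa [toList_ofList] using this.symm
  | mul a b iha ihb =>
    obtain ⟨ha1, ha2⟩ := iha h.left
    obtain ⟨hb1, hb2⟩ := ihb h.right
    have hsuf : lltL (mword b) (mword a ++ mword b) :=
      h.ls.suffix_lltL rfl (mword_ne_nil a) (mword_ne_nil b)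
    -- lengths of nonzero coefficients
    have hlenA : ∀ p : FreeMonoid X, (evalM k a).coeff p ≠ 0 →
        (FreeMonoid.toList p).length = (mword a).length := by
      intro p hp
      rcases ha2 (FreeMonoid.toList p) (by rwa [ofList_toList]) with he | ⟨-, hl⟩
      · rw [he]
      · exact hl
    have hlenB : ∀ q : FreeMonoid X, (evalM k b).coeff q ≠ 0 →
        (FreeMonoid.toList q).length = (mword b).length := by
      intro q hq
      rcases hb2 (FreeMonoid.toList q) (by rwa [ofList_toList]) with he | ⟨-, hl⟩
      · rw [he]
      · exact hl
    -- any monomial of B * A is strictly smaller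
    have hBA : ∀ v : List X, (evalM k b * evalM k a).coeff (FreeMonoid.ofList v) ≠ 0 →
        lltL v (mword a ++ mword b) ∧ v.length = (mword a ++ mword b).length := by
      intro v hv
      obtain ⟨q, p, hq, hp, hqp⟩ := mul_coeff_ne_zero hv
      have hv' : FreeMonoid.toList q ++ FreeMonoid.toList p = v := by
        have := congrArg FreeMonoid.toList hqp
        rwa [FreeMonoid.toList_mul, toList_ofList] at this
      have hq' : lltL (FreeMonoid.toList q) (mword a ++ mword b) := by
        rcases hb2 (FreeMonoid.toList q) (by rwa [ofList_toList]) with he | ⟨hl, -⟩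
        · rw [he]; exact hsuf
        · exact lltL_trans hl hsuf
      constructor
      · rw [← hv']
        exact hq'.append_right _
      · rw [← hv']
        simp only [List.length_append]
        rw [hlenA p hp, hlenB q hq]
        omega
    have htop : FreeMonoid.ofList (mword a) * FreeMonoid.ofList (mword b) =
        FreeMonoid.ofList (mword a ++ mword b) := rfl
    have hABtop : (evalM k a * evalM k b).coeff (FreeMonoid.ofList (mword a ++ mword b)) = 1 := by
      rw [mul_coeff_unique htop ?_]
      · rw [ha1, hb1, one_mul]
      · intro p q hp hq hpq
        have hv' : FreeMonoid.toList p ++ FreeMonoid.toList q = mword a ++ mword b := by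
          have := congrArg FreeMonoid.toList hpq
          rwa [FreeMonoid.toList_mul, toList_ofList] at this
        have hpl := hlenA p hp
        obtain ⟨e1, e2⟩ := List.append_inj hv' hpl
        constructor
        · rw [← ofList_toList p, e1]
        · rw [← ofList_toList q, e2]
    have hBAtop : (evalM k b * evalM k a).coeff (FreeMonoid.ofList (mword a ++ mword b)) = 0 := by
      by_contra h0
      exact lltL_irrefl _ (hBA _ h0).1
    constructor
    · simp only [evalM_mul, mword_mul, sub_apply', hABtop, hBAtop, sub_zero]
    · intro v hv
      simp only [evalM_mul, mword_mul, sub_apply'] at hv ⊢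
      have : (evalM k a * evalM k b).coeff (FreeMonoid.ofList v) ≠ 0 ∨
          (evalM k b * evalM k a).coeff (FreeMonoid.ofList v) ≠ 0 := by
        by_contra hc
        push_neg at hc
        rw [hc.1, hc.2, sub_zero] at hv
        exact hv rfl
      rcases this with hv' | hv'
      · obtain ⟨p, q, hp, hq, hpq⟩ := mul_coeff_ne_zero hv'
        have hv'' : FreeMonoid.toList p ++ FreeMonoid.toList q = v := by
          have := congrArg FreeMonoid.toList hpq
          rwa [FreeMonoid.toList_mul, toList_ofList] at this
        have hlen : v.length = (mword a ++ mword b).length := by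
          rw [← hv'']
          simp only [List.length_append]
          rw [hlenA p hp, hlenB q hq]
        rcases ha2 (FreeMonoid.toList p) (by rwa [ofList_toList]) with hep | ⟨hlp, -⟩
        · rcases hb2 (FreeMonoid.toList q) (by rwa [ofList_toList]) with heq | ⟨hlq, -⟩
          · left; rw [← hv'', hep, heq]
          · right
            refine ⟨?_, hlen⟩
            rw [← hv'', hep]
            rw [lltL_append_left_iff]
            exact hlq
        · right
          refine ⟨?_, hlen⟩
          rw [← hv'']
          exact (hlp.append_right _).append_right' _
      · exact Or.inr (hBA v hv')

end LS
namespace LS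
variable {X : Type*} [LinearOrder X] {k : Type*} [Field k]

lemma finset_exists_max (s : Finset (List X)) (hs : s.Nonempty) :
    ∃ w ∈ s, ∀ v ∈ s, v = w ∨ llt v w := by
  classical
  induction s using Finset.induction_on with
  | empty => exact absurd hs (by simp)
  | @insert a u ha ih =>
    rcases u.eq_empty_or_nonempty with rfl | hne
    · exact ⟨a, by simp, by simp⟩
    · obtain ⟨w, hw, hmax⟩ := ih hne
      rcases llt_trichotomy a w with h | rfl | h
      · refine ⟨w, by simp [hw], ?_⟩
        intro v hv
        rcases Finset.mem_insert.mp hv with rfl | hv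
        · exact Or.inr h
        · exact hmax v hv
      · refine ⟨a, by simp [hw], ?_⟩
        intro v hv
        rcases Finset.mem_insert.mp hv with rfl | hv
        · exact Or.inl rfl
        · exact hmax v hv
      · refine ⟨a, by simp, ?_⟩
        intro v hv
        rcases Finset.mem_insert.mp hv with rfl | hv
        · exact Or.inl rfl
        · rcases hmax v hv with rfl | h'
          · exact Or.inr h
          · exact Or.inr (llt_trans h' h)

theorem nls_independent :
    LinearIndependent k (fun t : {t : FreeMagma X // IsNLS t} => evalM k t.1) := by
  classical
  rw [linearIndependent_iff]
  intro l hl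
  by_contra hlne
  have hsup : l.support.Nonempty := Finsupp.support_nonempty_iff.mpr hlne
  obtain ⟨w₀, hw₀, hmax⟩ := finset_exists_max (l.support.image fun t => mword t.1)
    (hsup.image _)
  obtain ⟨t₀, ht₀, hw⟩ := Finset.mem_image.mp hw₀
  have hEval := congrArg (fun f : FA k X => f.coeff (FreeMonoid.ofList w₀)) hl
  rw [Finsupp.linearCombination_apply, Finsupp.sum] at hEval
  rw [MonoidAlgebra.coeff_sum, Finset.sum_apply'] at hEval
  rw [Finset.sum_eq_single t₀] at hEval
  · rw [MonoidAlgebra.coeff_smul_apply, ← hw, (leading t₀.1 t₀.2).1, smul_eq_mul, mul_one] at hEval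
    exact (Finsupp.mem_support_iff.mp ht₀) hEval
  · intro t ht htne
    rw [MonoidAlgebra.coeff_smul_apply]
    have h0 : (evalM k t.1).coeff (FreeMonoid.ofList w₀) = 0 := by
      by_contra h0
      have htw : mword t.1 ≠ w₀ := by
        intro he
        refine htne (Subtype.ext ?_)
        refine nls_unique t.1 t₀.1 t.2 t₀.2 ?_
        rw [he, hw]
      rcases (leading t.1 t.2).2 w₀ h0 with he | ⟨hlt', -⟩
      · exact htw he.symm
      · rcases hmax (mword t.1) (Finset.mem_image_of_mem _ ht) with he | hlt''
        · exact htw he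
        · exact llt_irrefl _ (llt_trans hlt'.llt hlt'')
    rw [h0, smul_zero]
  · intro h
    exact absurd ht₀ h

end LS
namespace LS
variable {X : Type*} [LinearOrder X] {k : Type*} [Field k]

/-- finite set of words of length n with letters in S -/
def allW (S : Finset X) : ℕ → Finset (List X)
  | 0 => {[]}
  | n + 1 => by
    classical
    exact S.biUnion fun a => (allW S n).image (a :: ·)

lemma mem_allW (S : Finset X) : ∀ (n : ℕ) (w : List X),
    w ∈ allW S n ↔ w.length = n ∧ ∀ x ∈ w, x ∈ S
  | 0, w => by
    simp only [allW, Finset.mem_singleton]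
    constructor
    · rintro rfl; simp
    · rintro ⟨h, -⟩; exact List.eq_nil_of_length_eq_zero h
  | n + 1, w => by
    classical
    simp only [allW, Finset.mem_biUnion, Finset.mem_image]
    constructor
    · rintro ⟨a, ha, v, hv, rfl⟩
      obtain ⟨h1, h2⟩ := (mem_allW S n v).mp hv
      refine ⟨by simp [h1], ?_⟩
      intro x hx
      rcases List.mem_cons.mp hx with rfl | hx
      · exact ha
      · exact h2 x hx
    · rintro ⟨h1, h2⟩
      cases w with
      | nil => simp at h1
      | cons a v =>
        refine ⟨a, h2 a (by simp), v, (mem_allW S n v).mpr ⟨by simpa using h1, ?_⟩, rfl⟩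
        intro x hx
        exact h2 x (by simp [hx])

/-- rank of a word: number of strictly smaller words in `allW S n` -/
noncomputable def wrank (S : Finset X) (n : ℕ) (w : List X) : ℕ := by
  classical
  exact ((allW S n).filter (fun v => llt v w)).card

lemma wrank_lt {S : Finset X} {n : ℕ} {v w : List X} (hv : v ∈ allW S n)
    (h : llt v w) : wrank S n v < wrank S n w := by
  classical
  rw [wrank, wrank]
  refine Finset.card_lt_card ?_
  rw [Finset.ssubset_iff_of_subset]
  · exact ⟨v, by simp [Finset.mem_filter, hv, h], by simp [Finset.mem_filter, llt_irrefl]⟩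
  · intro u hu
    rw [Finset.mem_filter] at hu ⊢
    exact ⟨hu.1, llt_trans hu.2 h⟩

/-- the span of NLS evaluations of words of length `n`, letters in `S`,
word at most `W` -/
def espan (k : Type*) [Field k] (n : ℕ) (S : Finset X) (W : List X) :
    Submodule k (FA k X) :=
  Submodule.span k
    {f | ∃ t : FreeMagma X, IsNLS t ∧ mword t ∈ allW S n ∧ lle (mword t) W ∧ f = evalM k t}

lemma espan_mono {n : ℕ} {S : Finset X} {W W' : List X} (h : lle W W') :
    espan k n S W ≤ espan k n S W' := by
  refine Submodule.span_le.mpr ?_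
  rintro f ⟨t, h1, h2, h3, rfl⟩
  exact Submodule.subset_span ⟨t, h1, h2, h3.trans h, rfl⟩

lemma bracket_mem {g z : FA k X} {s : Set (FA k X)} {p : Submodule k (FA k X)}
    (hz : z ∈ Submodule.span k s) (H : ∀ y ∈ s, g * y - y * g ∈ p) :
    g * z - z * g ∈ p := by
  induction hz using Submodule.span_induction with
  | mem y hy => exact H y hy
  | zero => simpa using p.zero_mem
  | add x y hx hy ihx ihy =>
    have he : g * (x + y) - (x + y) * g = (g * x - x * g) + (g * y - y * g) := by noncomm_ring
    rw [he]
    exact p.add_mem ihx ihy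
  | smul c x hx ihx =>
    have he : g * (c • x) - (c • x) * g = c • (g * x - x * g) := by
      rw [smul_sub, mul_smul_comm, smul_mul_assoc]
    rw [he]
    exact p.smul_mem c ihx

lemma lle_append_right {u v : List X} (w : List X) (h : lle u v)
    (hlen : u.length = v.length) : lle (u ++ w) (v ++ w) := by
  rcases h with h | rfl
  · exact Or.inl (((llt_iff_lltL_of_length hlen.le).mp h).append w w).llt
  · exact Or.inr rfl

lemma lle_append_left {u v : List X} (c : List X) (h : lle u v) :
    lle (c ++ u) (c ++ v) := by
  rcases h with h | rfl
  · exact Or.inl ((llt_append_left_iff c u v).mpr h)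
  · exact Or.inr rfl

/-- Shirshov's rewriting lemma: the product of two NLS trees with decreasing
words lies in the span of NLS trees with words bounded by the concatenation. -/
theorem RW : ∀ (n : ℕ), ∀ (km kl : ℕ), ∀ (S : Finset X) (s r : FreeMagma X),
    IsNLS s → IsNLS r → llt (mword r) (mword s) →
    (mword s ++ mword r) ∈ allW S n →
    wrank S n (mword s ++ mword r) ≤ km → (mword s).length ≤ kl →
    evalM k (s.mul r) ∈ espan k n S (mword s ++ mword r) := by
  intro n
  induction n using Nat.strong_induction_on with
  | _ n IHn =>
  intro km
  induction km using Nat.strong_induction_on with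
  | _ km IHkm =>
  intro kl
  induction kl using Nat.strong_induction_on with
  | _ kl IHkl =>
  intro S s r hsN hrN hlt hmem hrank hkl
  obtain ⟨hlen_n, hlet⟩ := (mem_allW S n _).mp hmem
  cases s with
  | of x =>
    refine Submodule.subset_span
      ⟨(FreeMagma.of x).mul r, ⟨trivial, hrN, ?_, trivial⟩, hmem, Or.inr rfl, rfl⟩
    exact (isLS_singleton x).concat hrN.isLS hlt
  | mul s1 s2 =>
    simp only [mword_mul] at hlt hmem hrank hkl hlen_n hlet
    have hs1N : IsNLS s1 := hsN.left
    have hs2N : IsNLS s2 := hsN.right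
    have hls : IsLS (mword s1 ++ mword s2) := hsN.ls
    have hsufL : lltL (mword s2) (mword s1 ++ mword s2) :=
      hls.suffix_lltL rfl (mword_ne_nil s1) (mword_ne_nil s2)
    have hpre : llt (mword s1 ++ mword s2) (mword s1) :=
      llt_append_self _ _ (mword_ne_nil s2)
    have h21 : llt (mword s2) (mword s1) := llt_trans hsufL.llt hpre
    rcases llt_trichotomy (mword r) (mword s2) with hcase | hcase | hcase
    rotate_left
    · -- r = s2 word: mul s r is already NLS
      refine Submodule.subset_span
        ⟨(s1.mul s2).mul r, ⟨hsN, hrN, ?_, ?_⟩, hmem, Or.inr rfl, rfl⟩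
      · exact hsN.isLS.concat hrN.isLS hlt
      · rw [hcase]; exact llt_irrefl _
    · -- s2 < r: mul s r is already NLS
      refine Submodule.subset_span
        ⟨(s1.mul s2).mul r, ⟨hsN, hrN, ?_, ?_⟩, hmem, Or.inr rfl, rfl⟩
      · exact hsN.isLS.concat hrN.isLS hlt
      · exact llt_asymm hcase
    · -- the hard case: r < s2, apply the Jacobi identity
      show evalM k ((s1.mul s2).mul r) ∈ espan k n S ((mword s1 ++ mword s2) ++ mword r)
      have hr1 : llt (mword r) (mword s1) := llt_trans hcase h21
      have hlet1 : ∀ x ∈ mword s1, x ∈ S := fun x hx => hlet x (by simp [hx])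
      have hlet2 : ∀ x ∈ mword s2, x ∈ S := fun x hx => hlet x (by simp [hx])
      have hletr : ∀ x ∈ mword r, x ∈ S := fun x hx => hlet x (by simp [hx])
      have hlenn : (mword s1).length + (mword s2).length + (mword r).length = n := by
        have := hlen_n
        simp only [List.length_append] at this
        omega
      have hmemT := hmem
      have hl1 : 0 < (mword s1).length := List.length_pos_iff.mpr (mword_ne_nil s1)
      have hl2 : 0 < (mword s2).length := List.length_pos_iff.mpr (mword_ne_nil s2)
      have hlr : 0 < (mword r).length := List.length_pos_iff.mpr (mword_ne_nil r)
      have hkl' : (mword s1).length + (mword s2).length ≤ kl := by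
        simpa [List.length_append] using hkl
      set n1 := (mword s1).length + (mword r).length with hn1
      set n2 := (mword s2).length + (mword r).length with hn2
      have hmem1 : (mword s1 ++ mword r) ∈ allW S n1 := by
        refine (mem_allW S n1 _).mpr ⟨by simp [hn1], ?_⟩
        intro x hx
        rcases List.mem_append.mp hx with h | h
        exacts [hlet1 x h, hletr x h]
      have hmem2 : (mword s2 ++ mword r) ∈ allW S n2 := by
        refine (mem_allW S n2 _).mpr ⟨by simp [hn2], ?_⟩
        intro x hx
        rcases List.mem_append.mp hx with h | h
        exacts [hlet2 x h, hletr x h]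
      have call1 : evalM k (s1.mul r) ∈ espan k n1 S (mword s1 ++ mword r) :=
        IHn n1 (by omega) (wrank S n1 (mword s1 ++ mword r)) (mword s1).length S s1 r
          hs1N hrN hr1 hmem1 le_rfl le_rfl
      have call2 : evalM k (s2.mul r) ∈ espan k n2 S (mword s2 ++ mword r) :=
        IHn n2 (by omega) (wrank S n2 (mword s2 ++ mword r)) (mword s2).length S s2 r
          hs2N hrN hcase hmem2 le_rfl le_rfl
      have hkey : lltL ((mword s1 ++ mword r) ++ mword s2)
          ((mword s1 ++ mword s2) ++ mword r) := by
        rw [List.append_assoc, List.append_assoc]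
        exact (lltL_append_left_iff _ _ _).mpr (vu_lltL_uv hs2N.isLS hrN.isLS hcase)
      -- Term A : bracketing call1 with s2
      have hA : evalM k s2 * evalM k (s1.mul r) - evalM k (s1.mul r) * evalM k s2 ∈
          espan k n S ((mword s1 ++ mword s2) ++ mword r) := by
        refine bracket_mem call1 ?_
        rintro y ⟨t'', hN'', hmem'', hle'', rfl⟩
        obtain ⟨hlen'', hlet''⟩ := (mem_allW S n1 _).mp hmem''
        have hmemA : (mword t'' ++ mword s2) ∈ allW S n := by
          refine (mem_allW S n _).mpr ⟨by simp [hlen'']; omega, ?_⟩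
          intro x hx
          rcases List.mem_append.mp hx with h | h
          exacts [hlet'' x h, hlet2 x h]
        rcases llt_trichotomy (mword s2) (mword t'') with hc | hc | hc
        · -- t'' > s2 : the product is evalM (t''.mul s2), up to sign
          have hWA : llt (mword t'' ++ mword s2) ((mword s1 ++ mword s2) ++ mword r) := by
            have h1 : lle (mword t'' ++ mword s2) ((mword s1 ++ mword r) ++ mword s2) :=
              lle_append_right _ hle'' (by simp [hlen'', hn1])
            exact h1.trans_llt hkey.llt
          have hrkA : wrank S n (mword t'' ++ mword s2) < km :=
            lt_of_lt_of_le (wrank_lt hmemA hWA) hrank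
          have hcall := IHkm (wrank S n (mword t'' ++ mword s2)) hrkA (mword t'').length
            S t'' s2 hN'' hs2N hc hmemA le_rfl le_rfl
          have hmem' := espan_mono (k := k) (Or.inl hWA) hcall
          have heq : evalM k s2 * evalM k t'' - evalM k t'' * evalM k s2 =
              -(evalM k (t''.mul s2)) := by
            simp only [evalM_mul]; noncomm_ring
          rw [heq]
          exact neg_mem hmem'
        · -- equal words: t'' = s2, the bracket vanishes
          rw [nls_unique _ _ hN'' hs2N hc.symm, sub_self]
          exact Submodule.zero_mem _
        · -- t'' < s2 : the product is evalM (s2.mul t'')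
          have hmemA' : (mword s2 ++ mword t'') ∈ allW S n := by
            refine (mem_allW S n _).mpr ⟨by simp [hlen'']; omega, ?_⟩
            intro x hx
            rcases List.mem_append.mp hx with h | h
            exacts [hlet2 x h, hlet'' x h]
          have hWA' : llt (mword s2 ++ mword t'') ((mword s1 ++ mword s2) ++ mword r) := by
            rcases llt_iff.mp h21 with hL | ⟨hpre', hne'⟩
            · rw [List.append_assoc]
              exact (hL.append _ _).llt
            · obtain ⟨c, hcc⟩ := hpre'
              have hcne : c ≠ [] := by
                rintro rfl
                exact hne' (by simpa using hcc)
              have hc' : lltL c (mword s2) :=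
                hs2N.isLS.suffix_lltL hcc.symm (mword_ne_nil s1) hcne
              rw [← hcc] at hc'
              rw [← hcc, List.append_assoc, List.append_assoc, llt_append_left_iff]
              exact (hc'.append (mword t'') (mword r)).llt
          have hrkA' : wrank S n (mword s2 ++ mword t'') < km :=
            lt_of_lt_of_le (wrank_lt hmemA' hWA') hrank
          have hcall := IHkm (wrank S n (mword s2 ++ mword t'')) hrkA' (mword s2).length
            S s2 t'' hs2N hN'' hc hmemA' le_rfl le_rfl
          exact espan_mono (k := k) (Or.inl hWA') hcall
      -- Term B : bracketing s1 with call2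
      have hB : evalM k s1 * evalM k (s2.mul r) - evalM k (s2.mul r) * evalM k s1 ∈
          espan k n S ((mword s1 ++ mword s2) ++ mword r) := by
        refine bracket_mem call2 ?_
        rintro y ⟨t', hN', hmem', hle', rfl⟩
        obtain ⟨hlen', hlet'⟩ := (mem_allW S n2 _).mp hmem'
        have hlt' : llt (mword t') (mword s1) :=
          hle'.trans_llt (llt_trans (llt_append_self _ _ (mword_ne_nil r)) h21)
        have hmemB : (mword s1 ++ mword t') ∈ allW S n := by
          refine (mem_allW S n _).mpr ⟨by simp [hlen']; omega, ?_⟩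
          intro x hx
          rcases List.mem_append.mp hx with h | h
          exacts [hlet1 x h, hlet' x h]
        rcases hle' with hstrict | heqw
        · have hWB : llt (mword s1 ++ mword t') ((mword s1 ++ mword s2) ++ mword r) := by
            rw [List.append_assoc, llt_append_left_iff]
            exact hstrict
          have hrkB : wrank S n (mword s1 ++ mword t') < km :=
            lt_of_lt_of_le (wrank_lt hmemB hWB) hrank
          have hcall := IHkm (wrank S n (mword s1 ++ mword t')) hrkB (mword s1).length
            S s1 t' hs1N hN' hlt' hmemB le_rfl le_rfl
          exact espan_mono (k := k) (Or.inl hWB) hcall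
        · -- same word: use the left-length induction
          have hrkB : wrank S n (mword s1 ++ mword t') ≤ km := by
            rw [heqw, ← List.append_assoc]
            exact hrank
          have hcall := IHkl (mword s1).length (by omega) S s1 t' hs1N hN' hlt' hmemB
            hrkB le_rfl
          refine espan_mono (k := k) (Or.inr ?_) hcall
          rw [heqw, ← List.append_assoc]
      have hfinal : evalM k ((s1.mul s2).mul r) =
          -(evalM k s2 * evalM k (s1.mul r) - evalM k (s1.mul r) * evalM k s2) +
            (evalM k s1 * evalM k (s2.mul r) - evalM k (s2.mul r) * evalM k s1) := by
        simp only [evalM_mul]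
        noncomm_ring
      rw [hfinal]
      exact add_mem (neg_mem hA) hB

end LS
namespace LS
variable {X : Type*} [LinearOrder X] {k : Type*} [Field k]

def nlsSet (k : Type*) [Field k] (X : Type*) [LinearOrder X] : Set (FA k X) :=
  Set.range fun t : {t : FreeMagma X // IsNLS t} => evalM k t.1

lemma espan_le_nls {n : ℕ} {S : Finset X} {W : List X} :
    espan k n S W ≤ Submodule.span k (nlsSet k X) := by
  refine Submodule.span_le.mpr ?_
  rintro f ⟨t, h1, -, -, rfl⟩
  exact Submodule.subset_span ⟨⟨t, h1⟩, rfl⟩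

lemma bracket_gen (t1 t2 : FreeMagma X) (h1 : IsNLS t1) (h2 : IsNLS t2)
    (hlt : llt (mword t2) (mword t1)) :
    evalM k t1 * evalM k t2 - evalM k t2 * evalM k t1 ∈ Submodule.span k (nlsSet k X) := by
  classical
  set W := mword t1 ++ mword t2 with hW
  have hmem : W ∈ allW W.toFinset W.length :=
    (mem_allW _ _ _).mpr ⟨rfl, fun x hx => List.mem_toFinset.mpr hx⟩
  have := RW (k := k) W.length (wrank W.toFinset W.length W) (mword t1).length
    W.toFinset t1 t2 h1 h2 hlt hmem le_rfl le_rfl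
  exact espan_le_nls this

lemma bracket_gen' (t1 t2 : FreeMagma X) (h1 : IsNLS t1) (h2 : IsNLS t2) :
    evalM k t1 * evalM k t2 - evalM k t2 * evalM k t1 ∈ Submodule.span k (nlsSet k X) := by
  rcases llt_trichotomy (mword t2) (mword t1) with h | h | h
  · exact bracket_gen t1 t2 h1 h2 h
  · rw [nls_unique t1 t2 h1 h2 h.symm, sub_self]
    exact Submodule.zero_mem _
  · have heq : evalM k t1 * evalM k t2 - evalM k t2 * evalM k t1 =
        -(evalM k t2 * evalM k t1 - evalM k t1 * evalM k t2) := by noncomm_ring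
    rw [heq]
    exact neg_mem (bracket_gen t2 t1 h2 h1 h)

lemma bracket_mem' {g z : FA k X} {s : Set (FA k X)} {p : Submodule k (FA k X)}
    (hz : z ∈ Submodule.span k s) (H : ∀ y ∈ s, y * g - g * y ∈ p) :
    z * g - g * z ∈ p := by
  induction hz using Submodule.span_induction with
  | mem y hy => exact H y hy
  | zero => simpa using p.zero_mem
  | add x y hx hy ihx ihy =>
    have he : (x + y) * g - g * (x + y) = (x * g - g * x) + (y * g - g * y) := by noncomm_ring
    rw [he]
    exact p.add_mem ihx ihy
  | smul c x hx ihx =>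
    have he : (c • x) * g - g * (c • x) = c • (x * g - g * x) := by
      rw [smul_sub, mul_smul_comm, smul_mul_assoc]
    rw [he]
    exact p.smul_mem c ihx

lemma bracket_span {x y : FA k X} (hx : x ∈ Submodule.span k (nlsSet k X))
    (hy : y ∈ Submodule.span k (nlsSet k X)) :
    x * y - y * x ∈ Submodule.span k (nlsSet k X) := by
  refine bracket_mem' hx ?_
  rintro z1 ⟨t1, rfl⟩
  refine bracket_mem hy ?_
  rintro z2 ⟨t2, rfl⟩
  exact bracket_gen' t1.1 t2.1 t1.2 t2.2

def nlsSub (k : Type*) [Field k] (X : Type*) [LinearOrder X] : LieSubalgebra k (FA k X) where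
  __ := Submodule.span k (nlsSet k X)
  lie_mem' := by
    intro x y hx hy
    rw [Ring.lie_def]
    exact bracket_span hx hy

lemma evalM_mem_lieSpan (t : FreeMagma X) :
    evalM k t ∈ LieSubalgebra.lieSpan k (FA k X) (gens k) := by
  induction t using FreeMagma.rec with
  | of x => exact LieSubalgebra.subset_lieSpan ⟨x, rfl⟩
  | mul a b iha ihb =>
    show evalM k a * evalM k b - evalM k b * evalM k a ∈ _
    rw [← Ring.lie_def]
    exact LieSubalgebra.lie_mem _ iha ihb

theorem nls_span :
    Submodule.span k (nlsSet k X) =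
      LieSubalgebra.toSubmodule (LieSubalgebra.lieSpan k (FA k X) (gens k)) := by
  apply le_antisymm
  · rw [Submodule.span_le]
    rintro f ⟨t, rfl⟩
    exact evalM_mem_lieSpan t.1
  · have h1 : LieSubalgebra.lieSpan k (FA k X) (gens k) ≤ nlsSub k X := by
      rw [LieSubalgebra.lieSpan_le]
      rintro f ⟨x, rfl⟩
      exact Submodule.subset_span ⟨⟨FreeMagma.of x, trivial⟩, rfl⟩
    intro f hf
    exact h1 hf

end LS

/-- The (commutator-evaluated) nonassociative Lyndon--Shirshov words form a linear
basis of the free Lie algebra, i.e. of the Lie subalgebra of the free associative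
algebra generated by X: they are linearly independent and span its underlying
submodule. -/
theorem stmt_5 :
    LinearIndependent k (fun t : {t : FreeMagma X // IsNLS t} => evalM k t.1) ∧
    Submodule.span k (Set.range fun t : {t : FreeMagma X // IsNLS t} => evalM k t.1) =
      LieSubalgebra.toSubmodule (LieSubalgebra.lieSpan k (FA k X) (gens k)) := by
  exact ⟨LS.nls_independent, LS.nls_span⟩
end
end
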